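/- Let q be a prime power with q ≡ 2 (mod 3) and q ≥ 5. The set S = ∪_{j=1}^{q-2}[jq-(j-1), jq] ∪ {0} ∪ {n : n ≥ q²-2q+2} is a numerical semigroup, and the set H = {h/3 : h ∈ S, 3 | h} is a numerical semigroup whose number of gaps equals (q²-q-2)/6. -/

import Mathlib

/-- A numerical semigroup: a subset of `ℕ` containing `0`, closed under addition,
with finite complement. -/
def IsNumericalSemigroup (S : Set ℕ) : Prop :=
  0 ∈ S ∧ (∀ a ∈ S, ∀ b ∈ S, a + b ∈ S) ∧ Sᶜ.Finite

/-- Division/modulo specification lemma. -/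
lemma divmod_spec (q r j n : ℕ) (hq : 0 < q) (hr : r < q) (h : n = j * q + r) :
    n % q = r ∧ n / q = j := by
  subst h
  constructor
  · rw [add_comm, Nat.add_mul_mod_self_right, Nat.mod_eq_of_lt hr]
  · rw [add_comm, Nat.add_mul_div_right _ _ hq, Nat.div_eq_of_lt hr, zero_add]

/-- Counting lemma: multiples of 3 of the form `d + s` with `1 ≤ s ≤ d`. -/
lemma stripe_card (d : ℕ) :
    ((Finset.Icc 1 d).filter (fun s => (d + s) % 3 = 0)).card = (d + 1) / 3 := by
  have h := Finset.card_nbij' (s := (Finset.Icc 1 d).filter (fun s => (d + s) % 3 = 0))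
    (t := Finset.Ioc (d / 3) (2 * d / 3))
    (fun s => (d + s) / 3) (fun k => 3 * k - d)
    (by intro s hs
        simp only [Finset.mem_coe, Finset.mem_filter, Finset.mem_Icc] at hs
        simp only [Finset.mem_coe, Finset.mem_Ioc]
        omega)
    (by intro k hk
        simp only [Finset.mem_coe, Finset.mem_Ioc] at hk
        simp only [Finset.mem_coe, Finset.mem_filter, Finset.mem_Icc]
        omega)
    (by intro s hs
        simp only [Finset.mem_coe, Finset.mem_filter, Finset.mem_Icc] at hs
        show 3 * ((d + s) / 3) - d = s
        omega)
    (by intro k hk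
        simp only [Finset.mem_coe, Finset.mem_Ioc] at hk
        show (d + (3 * k - d)) / 3 = k
        omega)
  rw [h, Nat.card_Ioc]
  obtain ⟨k, hk⟩ : ∃ k, d = 3 * k + d % 3 := ⟨d / 3, by omega⟩
  rcases (show d % 3 = 0 ∨ d % 3 = 1 ∨ d % 3 = 2 by omega) with h' | h' | h' <;>
    rw [h'] at hk <;> omega

/-- Sum of `(i+2)/3` over a range. -/
lemma sum_aux (m : ℕ) :
    (∑ i ∈ Finset.range (3 * m + 1), (i + 2) / 3) = 3 * (m * (m + 1)) / 2 := by
  induction m with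
  | zero => simp
  | succ k ih =>
    have h1 : 3 * (k + 1) + 1 = (3 * k + 1) + 1 + 1 + 1 := by ring
    rw [h1, Finset.sum_range_succ, Finset.sum_range_succ, Finset.sum_range_succ, ih]
    have h2 : (k + 1) * ((k + 1) + 1) = k * (k + 1) + 2 * (k + 1) := by ring
    obtain ⟨c, hc⟩ := Nat.even_mul_succ_self k
    omega

/-- For `q ≡ 2 (mod 3)`, `q ≥ 5`, the set
`S = ∪_{j=1}^{q-2}[jq-(j-1), jq] ∪ {0} ∪ {n : n ≥ q²-2q+2}` is a numerical semigroup,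
and `H = {h : 3h ∈ S}` is a numerical semigroup with exactly `(q²-q-2)/6` gaps. -/
theorem stmt_13 (q : ℕ) (hq : IsPrimePow q) (h3 : q % 3 = 2) (h5 : 5 ≤ q) :
    let S : Set ℕ :=
      {0} ∪ (⋃ j ∈ Finset.Icc 1 (q - 2), Set.Icc (j * q - (j - 1)) (j * q)) ∪
        {n | q ^ 2 - 2 * q + 2 ≤ n}
    let H : Set ℕ := {h | 3 * h ∈ S}
    IsNumericalSemigroup S ∧ IsNumericalSemigroup H ∧
      Set.ncard Hᶜ = (q ^ 2 - q - 2) / 6 := by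
  intro S H
  have hq0 : 0 < q := by omega
  have hpow : q ^ 2 = q * q := by ring
  have hqsq : q ≤ q * q := Nat.le_mul_of_pos_left q hq0
  have hmul1 : q * (q - 1) + q = q * q := by
    have h' : q - 1 + 1 = q := by omega
    calc q * (q - 1) + q = q * (q - 1 + 1) := by ring
      _ = q * q := by rw [h']
  have h2q : 2 * q ≤ q * q := Nat.mul_le_mul_right q (by omega)
  have hQ : q * q - 2 * q + 2 * q = q * q := Nat.sub_add_cancel h2q
  -- characterization of membership in S
  have hS : ∀ n : ℕ, n ∈ S ↔ (n % q = 0 ∨ q ≤ n % q + n / q ∨ q * q - 2 * q + 2 ≤ n) := by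
    intro n
    have hdm := Nat.div_add_mod n q
    have hmlt : n % q < q := Nat.mod_lt _ hq0
    simp only [S, Set.mem_union, Set.mem_singleton_iff, Set.mem_iUnion, Set.mem_Icc,
      Finset.mem_Icc, Set.mem_setOf_eq, exists_prop]
    rw [hpow]
    constructor
    · rintro ((rfl | ⟨j, ⟨hj1, hj2⟩, hlo, hhi⟩) | htail)
      · left; simp
      · rcases eq_or_lt_of_le hhi with heq | hlt
        · left; rw [heq]; exact Nat.mul_mod_left j q
        · have hjq : (j - 1) * q + q = j * q := by
            have hj : j - 1 + 1 = j := by omega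
            calc (j - 1) * q + q = (j - 1 + 1) * q := by ring
              _ = j * q := by rw [hj]
          have hcb : (j - 1) * q ≤ n := by omega
          obtain ⟨hm, hd⟩ := divmod_spec q (n - (j - 1) * q) (j - 1) n hq0 (by omega) (by omega)
          right; left; omega
      · right; right; exact htail
    · intro hcase
      rcases le_or_gt (q * q - 2 * q + 2) n with htail | hn
      · right; exact htail
      left
      rcases Nat.eq_zero_or_pos (n % q) with hb0 | hb1
      · -- n is a multiple of q
        rcases Nat.eq_zero_or_pos n with rfl | hn0
        · left; rfl
        right
        have hdvd : q ∣ n := Nat.dvd_of_mod_eq_zero hb0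
        have hge : q ≤ n := Nat.le_of_dvd hn0 hdvd
        have ha0 : 0 < n / q := Nat.div_pos hge hq0
        have ha2 : n / q ≤ q - 2 := by
          by_contra hcon
          have h1 : q * (q - 1) ≤ q * (n / q) := Nat.mul_le_mul_left q (by omega)
          omega
        refine ⟨n / q, ⟨by omega, ha2⟩, ?_, ?_⟩
        · have : (n / q) * q = q * (n / q) := by ring
          omega
        · have : (n / q) * q = q * (n / q) := by ring
          omega
      · -- n % q ≥ 1, so the middle condition must hold
        have hsum : q ≤ n % q + n / q := by
          rcases hcase with h' | h' | h'
          · omega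
          · exact h'
          · omega
        have haq : n / q ≤ q - 3 := by
          by_contra hcon
          push_neg at hcon
          have h1 : q * (q - 2) ≤ q * (n / q) := Nat.mul_le_mul_left q (by omega)
          have hmul2 : q * (q - 2) + 2 * q = q * q := by
            have h' : q - 2 + 2 = q := by omega
            calc q * (q - 2) + 2 * q = q * (q - 2 + 2) := by ring
              _ = q * q := by rw [h']
          rcases le_or_gt (q - 1) (n / q) with h2 | h2
          · have h3' : q * (q - 1) ≤ q * (n / q) := Nat.mul_le_mul_left q h2
            omega
          · omega
        right
        refine ⟨n / q + 1, ⟨by omega, by omega⟩, ?_, ?_⟩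
        · have : (n / q + 1) * q = q * (n / q) + q := by ring
          omega
        · have : (n / q + 1) * q = q * (n / q) + q := by ring
          omega
  -- closure of S under addition
  have hclosed : ∀ a ∈ S, ∀ b ∈ S, a + b ∈ S := by
    intro x hx y hy
    rw [hS] at hx hy ⊢
    obtain ⟨bx, hbx⟩ : ∃ t, x % q = t := ⟨_, rfl⟩
    obtain ⟨dx, hdxx⟩ : ∃ t, x / q = t := ⟨_, rfl⟩
    obtain ⟨by', hby⟩ : ∃ t, y % q = t := ⟨_, rfl⟩
    obtain ⟨dy, hdyy⟩ : ∃ t, y / q = t := ⟨_, rfl⟩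
    have hxeq : q * dx + bx = x := by rw [← hbx, ← hdxx]; exact Nat.div_add_mod x q
    have hyeq : q * dy + by' = y := by rw [← hby, ← hdyy]; exact Nat.div_add_mod y q
    have hbxlt : bx < q := by rw [← hbx]; exact Nat.mod_lt _ hq0
    have hbylt : by' < q := by rw [← hby]; exact Nat.mod_lt _ hq0
    rw [hbx, hdxx] at hx
    rw [hby, hdyy] at hy
    rcases le_or_gt (q * q - 2 * q + 2) x with ht | ht
    · right; right; omega
    rcases le_or_gt (q * q - 2 * q + 2) y with ht' | ht'
    · right; right; omega
    rcases lt_or_ge (bx + by') q with hc | hc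
    · obtain ⟨hm, hd⟩ := divmod_spec q (bx + by') (dx + dy) (x + y) hq0 hc
        (by have h' : (dx + dy) * q = q * dx + q * dy := by ring
            omega)
      rw [hm, hd]
      omega
    · obtain ⟨hm, hd⟩ := divmod_spec q (bx + by' - q) (dx + dy + 1) (x + y) hq0 (by omega)
        (by have h' : (dx + dy + 1) * q = q * dx + q * dy + q := by ring
            omega)
      rw [hm, hd]
      omega
  have hfinS : Sᶜ.Finite := by
    apply Set.Finite.subset (Set.finite_Iio (q * q))
    intro n hn
    simp only [Set.mem_compl_iff] at hn
    simp only [Set.mem_Iio]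
    by_contra hcon
    exact hn ((hS n).mpr (Or.inr (Or.inr (by omega))))
  have h0S : 0 ∈ S := (hS 0).mpr (Or.inl (Nat.zero_mod q))
  -- H facts
  have hHmem : ∀ h : ℕ, h ∈ H ↔ 3 * h ∈ S := fun h => Iff.rfl
  have h0H : 0 ∈ H := by
    rw [hHmem]
    exact (hS 0).mpr (Or.inl (Nat.zero_mod q))
  have hclosedH : ∀ a ∈ H, ∀ b ∈ H, a + b ∈ H := by
    intro x hx y hy
    rw [hHmem] at hx hy ⊢
    have h' : 3 * (x + y) = 3 * x + 3 * y := by ring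
    rw [h']
    exact hclosed _ hx _ hy
  have hfinH : Hᶜ.Finite := by
    apply Set.Finite.subset (Set.finite_Iio (q * q))
    intro n hn
    simp only [Set.mem_compl_iff] at hn
    simp only [Set.mem_Iio]
    by_contra hcon
    exact hn ((hHmem n).mpr ((hS (3 * n)).mpr (Or.inr (Or.inr (by omega)))))
  refine ⟨⟨h0S, hclosed, hfinS⟩, ⟨h0H, hclosedH, hfinH⟩, ?_⟩
  -- the counting part
  classical
  set F : Finset ℕ := (Finset.range (q * q)).filter
    (fun h => ¬ (3 * h % q = 0 ∨ q ≤ 3 * h % q + 3 * h / q ∨ q * q - 2 * q + 2 ≤ 3 * h))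
    with hF
  have hHc : Hᶜ = ↑F := by
    ext h
    simp only [Set.mem_compl_iff, hF, Finset.coe_filter, Set.mem_setOf_eq, Finset.mem_range]
    rw [hHmem, hS (3 * h)]
    obtain ⟨b, hb⟩ : ∃ t, 3 * h % q = t := ⟨_, rfl⟩
    obtain ⟨d, hd⟩ : ∃ t, 3 * h / q = t := ⟨_, rfl⟩
    rw [hb, hd]
    constructor
    · intro hnot
      refine ⟨?_, hnot⟩
      rcases lt_or_ge h (q * q) with h' | h'
      · exact h'
      · exact absurd (Or.inr (Or.inr (by omega))) hnot
    · intro ⟨_, hnot⟩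
      exact hnot
  set T : Finset ((_ : ℕ) × ℕ) := (Finset.Icc 1 (q - 1)).sigma
    (fun d => (Finset.Icc 1 d).filter (fun s => (d + s) % 3 = 0)) with hT
  have hcard : F.card = T.card := by
    apply Finset.card_nbij' (fun h => ⟨3 * h % q + 3 * h / q, 3 * h % q⟩)
      (fun p => ((p.1 - p.2) * q + p.2) / 3)
    · intro h hh
      simp only [hF, Finset.mem_coe, Finset.mem_filter, Finset.mem_range, not_or, not_le] at hh
      obtain ⟨hlt, hb0, hba, htail⟩ := hh
      obtain ⟨b, hb⟩ : ∃ t, 3 * h % q = t := ⟨_, rfl⟩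
      obtain ⟨d, hd⟩ : ∃ t, 3 * h / q = t := ⟨_, rfl⟩
      have hdm : q * d + b = 3 * h := by rw [← hb, ← hd]; exact Nat.div_add_mod (3 * h) q
      have hblt : b < q := by rw [← hb]; exact Nat.mod_lt _ hq0
      rw [hb] at hb0
      rw [hb, hd] at hba
      show (⟨3 * h % q + 3 * h / q, 3 * h % q⟩ : (_ : ℕ) × ℕ) ∈ T
      rw [hb, hd]
      simp only [hT, Finset.mem_sigma, Finset.mem_Icc, Finset.mem_filter]
      refine ⟨⟨by omega, by omega⟩, ⟨by omega, by omega⟩, ?_⟩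
      have key : (q * d + b) % 3 = ((q % 3) * (d % 3) % 3 + b % 3) % 3 := by
        rw [Nat.add_mod, Nat.mul_mod]
      rw [h3, hdm] at key
      omega
    · intro p hp
      obtain ⟨d, s⟩ := p
      simp only [hT, Finset.mem_coe, Finset.mem_sigma, Finset.mem_Icc, Finset.mem_filter] at hp
      obtain ⟨⟨hd1, hd2⟩, ⟨hs1, hs2⟩, hmod⟩ := hp
      have h3n : ((d - s) * q + s) % 3 = 0 := by
        have key : ((d - s) * q + s) % 3
            = (((d - s) % 3) * (q % 3) % 3 + s % 3) % 3 := by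
          rw [Nat.add_mod, Nat.mul_mod]
        rw [h3] at key
        omega
      have hmul3 : 3 * (((d - s) * q + s) / 3) = (d - s) * q + s :=
        Nat.mul_div_cancel' (Nat.dvd_of_mod_eq_zero h3n)
      obtain ⟨hm, hd⟩ := divmod_spec q s (d - s) ((d - s) * q + s) hq0 (by omega) rfl
      show ((d - s) * q + s) / 3 ∈ F
      simp only [hF, Finset.mem_filter, Finset.mem_range, not_or, not_le]
      have hmono : (d - s) * q ≤ (q - 1) * q := Nat.mul_le_mul_right q (by omega)
      have hb1 : (q - 1) * q + q = q * q := by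
        have h' : q - 1 + 1 = q := by omega
        calc (q - 1) * q + q = (q - 1 + 1) * q := by ring
          _ = q * q := by rw [h']
      refine ⟨?_, ?_, ?_, ?_⟩
      · have hle : ((d - s) * q + s) / 3 ≤ (d - s) * q + s := Nat.div_le_self _ _
        omega
      · rw [hmul3, hm]; omega
      · rw [hmul3, hm, hd]; omega
      · rw [hmul3]
        have h1 : (d - s) * q ≤ (q - 1 - s) * q := Nat.mul_le_mul_right q (by omega)
        have h4 : (q - 1 - s) * q + s * q + q = q * q := by
          have h' : (q - 1 - s) + s + 1 = q := by omega
          calc (q - 1 - s) * q + s * q + q = ((q - 1 - s) + s + 1) * q := by ring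
            _ = q * q := by rw [h']
        have h6 : s + q ≤ s * q + 1 := by
          obtain ⟨s', rfl⟩ := Nat.exists_eq_add_of_le hs1
          have h7 : (1 + s') * q = q + s' * q := by ring
          have h8 : s' ≤ s' * q := Nat.le_mul_of_pos_right s' hq0
          omega
        omega
    · intro h hh
      show ((3 * h % q + 3 * h / q - 3 * h % q) * q + 3 * h % q) / 3 = h
      obtain ⟨b, hb⟩ : ∃ t, 3 * h % q = t := ⟨_, rfl⟩
      obtain ⟨d, hd⟩ : ∃ t, 3 * h / q = t := ⟨_, rfl⟩
      have hdm : q * d + b = 3 * h := by rw [← hb, ← hd]; exact Nat.div_add_mod (3 * h) q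
      rw [hb, hd, show b + d - b = d from by omega, show d * q + b = 3 * h from by
        have h' : d * q = q * d := by ring
        omega]
      omega
    · intro p hp
      obtain ⟨d, s⟩ := p
      simp only [hT, Finset.mem_coe, Finset.mem_sigma, Finset.mem_Icc, Finset.mem_filter] at hp
      obtain ⟨⟨hd1, hd2⟩, ⟨hs1, hs2⟩, hmod⟩ := hp
      have h3n : ((d - s) * q + s) % 3 = 0 := by
        have key : ((d - s) * q + s) % 3
            = (((d - s) % 3) * (q % 3) % 3 + s % 3) % 3 := by
          rw [Nat.add_mod, Nat.mul_mod]
        rw [h3] at key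
        omega
      have hmul3 : 3 * (((d - s) * q + s) / 3) = (d - s) * q + s :=
        Nat.mul_div_cancel' (Nat.dvd_of_mod_eq_zero h3n)
      obtain ⟨hm, hd⟩ := divmod_spec q s (d - s) ((d - s) * q + s) hq0 (by omega) rfl
      show (⟨3 * (((d - s) * q + s) / 3) % q + 3 * (((d - s) * q + s) / 3) / q,
        3 * (((d - s) * q + s) / 3) % q⟩ : (_ : ℕ) × ℕ) = ⟨d, s⟩
      rw [hmul3, hm, hd, Nat.add_sub_cancel' hs2]
  rw [hHc, Set.ncard_coe_finset, hcard, hT, Finset.card_sigma]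
  have hsum1 : (∑ d ∈ Finset.Icc 1 (q - 1),
      ((Finset.Icc 1 d).filter (fun s => (d + s) % 3 = 0)).card)
      = ∑ d ∈ Finset.Icc 1 (q - 1), (d + 1) / 3 :=
    Finset.sum_congr rfl (fun d _ => stripe_card d)
  rw [hsum1]
  rw [show Finset.Icc 1 (q - 1) = Finset.Ico 1 q from by
    rw [← Finset.Ico_add_one_right_eq_Icc]; congr 1; omega]
  rw [Finset.sum_Ico_eq_sum_range]
  have hsum2 : (∑ i ∈ Finset.range (q - 1), (1 + i + 1) / 3)
      = ∑ i ∈ Finset.range (q - 1), (i + 2) / 3 :=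
    Finset.sum_congr rfl (fun i _ => by omega)
  rw [hsum2]
  obtain ⟨m, hqm⟩ : ∃ m, q = 3 * m + 2 := ⟨q / 3, by omega⟩
  rw [show q - 1 = 3 * m + 1 from by omega, sum_aux]
  have h1 : q ^ 2 = 9 * (m * m) + 12 * m + 4 := by rw [hqm]; ring
  have h2 : m * (m + 1) = m * m + m := by ring
  obtain ⟨c, hc⟩ := Nat.even_mul_succ_self m
  omega
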